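/- Let G be a finite simple graph with an orientation of its edges and triangles. The Helmholtzian matrix H(G) is irreducible if and only if the graph Λ_R(G) is connected. -/

import Mathlib

open scoped Classical
open scoped Matrix

namespace HelmPaper

variable {V : Type} [Fintype V] [DecidableEq V]

/-- The set of triangles of `G`, i.e. the 3-element cliques of `G`. -/
abbrev Triangle (G : SimpleGraph V) : Type :=
  {s : Finset V // s.card = 3 ∧ G.IsClique (s : Set V)}

/-- An orientation of the edges of `G`: each edge `e` gets a head `e⁺` and a tail `e⁻`. -/
structure Orientation (G : SimpleGraph V) where
  head : G.edgeSet → V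
  tail : G.edgeSet → V
  consistent : ∀ e : G.edgeSet, (e : Sym2 V) = s(head e, tail e)

/-- A cyclic orientation of each triangle of `G`, recorded by a representative ordered
triple of its three vertices. -/
structure TriOrientation (G : SimpleGraph V) where
  fst : Triangle G → V
  snd : Triangle G → V
  trd : Triangle G → V
  consistent : ∀ t : Triangle G, ({fst t, snd t, trd t} : Finset V) = t.val

/-- The edge-vertex incidence matrix `B`. -/
noncomputable def bMat (G : SimpleGraph V) (o : Orientation G) : Matrix G.edgeSet V ℝ :=
  fun e v => if v = o.head e then 1 else if v = o.tail e then -1 else 0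

/-- The oriented edge `e` agrees with the cyclic orientation of the triangle `t`. -/
def Agrees {G : SimpleGraph V} (o : Orientation G) (τ : TriOrientation G)
    (e : G.edgeSet) (t : Triangle G) : Prop :=
  (o.tail e = τ.fst t ∧ o.head e = τ.snd t) ∨
  (o.tail e = τ.snd t ∧ o.head e = τ.trd t) ∨
  (o.tail e = τ.trd t ∧ o.head e = τ.fst t)

/-- The oriented edge `e` disagrees with the cyclic orientation of the triangle `t`. -/
def Disagrees {G : SimpleGraph V} (o : Orientation G) (τ : TriOrientation G)
    (e : G.edgeSet) (t : Triangle G) : Prop :=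
  (o.head e = τ.fst t ∧ o.tail e = τ.snd t) ∨
  (o.head e = τ.snd t ∧ o.tail e = τ.trd t) ∨
  (o.head e = τ.trd t ∧ o.tail e = τ.fst t)

/-- The triangle-edge incidence matrix `C`. -/
noncomputable def cMat (G : SimpleGraph V) (o : Orientation G) (τ : TriOrientation G) :
    Matrix (Triangle G) G.edgeSet ℝ :=
  fun t e => if Agrees o τ e t then 1 else if Disagrees o τ e t then -1 else 0

/-- The Helmholtzian matrix `H(G) = B Bᵀ + Cᵀ C`. -/
noncomputable def helm (G : SimpleGraph V) (o : Orientation G) (τ : TriOrientation G) :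
    Matrix G.edgeSet G.edgeSet ℝ :=
  bMat G o * (bMat G o)ᵀ + (cMat G o τ)ᵀ * cMat G o τ

/-- The edge `e` (as an unordered pair of vertices) lies in the triangle `t`. -/
def EdgeInTri (G : SimpleGraph V) (e : Sym2 V) (t : Triangle G) : Prop :=
  ∀ v ∈ e, v ∈ t.val

/-- The triangle degree `△(e)`: the number of triangles of `G` containing the edge `e`. -/
noncomputable def triDeg (G : SimpleGraph V) (e : Sym2 V) : ℕ :=
  (Finset.univ.filter fun t : Triangle G => EdgeInTri G e t).card

/-- A square matrix is *reducible* if some simultaneous permutation of its rows and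
columns puts it in block diagonal form with two non-trivial square diagonal blocks. -/
def MatReducible {α : Type} [Fintype α] [DecidableEq α] (M : Matrix α α ℝ) : Prop :=
  ∃ (p q : ℕ), 0 < p ∧ 0 < q ∧
    ∃ (σ : α ≃ (Fin p ⊕ Fin q)) (A : Matrix (Fin p) (Fin p) ℝ)
      (D : Matrix (Fin q) (Fin q) ℝ),
      Matrix.reindex σ σ M = Matrix.fromBlocks A 0 0 D

/-- The underlying graph of the signed graph `Λ_R(G)`: its vertices are the edges of `G`,
and two distinct edges of `G` are adjacent when they share an endpoint and lie in no
common triangle of `G` (this underlying adjacency does not depend on the orientation). -/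
def lambdaR (G : SimpleGraph V) : SimpleGraph G.edgeSet where
  Adj e e' := e ≠ e' ∧ (∃ v : V, v ∈ (e : Sym2 V) ∧ v ∈ (e' : Sym2 V)) ∧
    ¬∃ t : Triangle G, EdgeInTri G (e : Sym2 V) t ∧ EdgeInTri G (e' : Sym2 V) t
  symm := by
    constructor
    rintro e e' ⟨h₁, ⟨v, hv₁, hv₂⟩, h₃⟩
    exact ⟨h₁.symm, ⟨v, hv₂, hv₁⟩, fun ⟨t, ht₁, ht₂⟩ => h₃ ⟨t, ht₂, ht₁⟩⟩
  loopless := by constructor; rintro e ⟨h, _⟩; exact h rfl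

section Aux

lemma matReducible_iff {α : Type} [Fintype α] [DecidableEq α] (M : Matrix α α ℝ) :
    MatReducible M ↔ ∃ S : Set α, S.Nonempty ∧ Sᶜ.Nonempty ∧
      ∀ i ∈ S, ∀ j ∈ Sᶜ, M i j = 0 ∧ M j i = 0 := by
  constructor
  · rintro ⟨p, q, hp, hq, σ, A, D, hM⟩
    refine ⟨{a | ∃ x, σ a = Sum.inl x}, ⟨σ.symm (Sum.inl ⟨0, hp⟩), ⟨0, hp⟩, by simp⟩,
      ⟨σ.symm (Sum.inr ⟨0, hq⟩), ?_⟩, ?_⟩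
    · simp [Set.mem_compl_iff]
    · rintro i ⟨x, hx⟩ j hj
      obtain ⟨y, hy⟩ : ∃ y, σ j = Sum.inr y := by
        rcases hσ : σ j with y | y
        · exact absurd ⟨y, hσ⟩ hj
        · exact ⟨y, rfl⟩
      constructor
      · have := congrFun (congrFun hM (Sum.inl x)) (Sum.inr y)
        rw [Matrix.fromBlocks_apply₁₂] at this
        simpa [Matrix.reindex_apply, Matrix.submatrix_apply, ← hx, ← hy] using this
      · have := congrFun (congrFun hM (Sum.inr y)) (Sum.inl x)
        rw [Matrix.fromBlocks_apply₂₁] at this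
        simpa [Matrix.reindex_apply, Matrix.submatrix_apply, ← hx, ← hy] using this
  · rintro ⟨S, hS, hSc, hcut⟩
    have h1 : Nonempty S := hS.to_subtype
    have h2 : Nonempty (Sᶜ : Set α) := hSc.to_subtype
    set p := Fintype.card S
    set q := Fintype.card (Sᶜ : Set α)
    refine ⟨p, q, Fintype.card_pos, Fintype.card_pos, ?_⟩
    have eS : S ≃ Fin p := Fintype.equivFin S
    have eSc : (Sᶜ : Set α) ≃ Fin q := Fintype.equivFin _
    let σ : α ≃ (Fin p ⊕ Fin q) :=
      ((Equiv.sumCompl (· ∈ S)).symm.trans (Equiv.sumCongr eS eSc))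
    refine ⟨σ, fun x y => M (σ.symm (Sum.inl x)) (σ.symm (Sum.inl y)),
      fun x y => M (σ.symm (Sum.inr x)) (σ.symm (Sum.inr y)), ?_⟩
    have hmem : ∀ x : Fin p, σ.symm (Sum.inl x) ∈ S := fun x => by
      simp [σ, Equiv.symm_trans_apply]
    have hmem' : ∀ y : Fin q, σ.symm (Sum.inr y) ∈ Sᶜ := fun y => by
      simp [σ, Equiv.symm_trans_apply]
    ext i j
    rcases i with x | x <;> rcases j with y | y <;>
      simp only [Matrix.reindex_apply, Matrix.submatrix_apply, Matrix.fromBlocks_apply₁₁,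
        Matrix.fromBlocks_apply₁₂, Matrix.fromBlocks_apply₂₁, Matrix.fromBlocks_apply₂₂,
        Matrix.zero_apply, Matrix.fromBlocks, Matrix.of_apply, Sum.elim_inl, Sum.elim_inr,
        Pi.zero_apply]
    · exact (hcut _ (hmem x) _ (hmem' y)).1
    · exact (hcut _ (hmem y) _ (hmem' x)).2

lemma connected_iff_no_cut {α : Type} [Nonempty α] (G : SimpleGraph α) :
    G.Connected ↔ ¬ ∃ S : Set α, S.Nonempty ∧ Sᶜ.Nonempty ∧
      ∀ i ∈ S, ∀ j ∈ Sᶜ, ¬ G.Adj i j := by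
  constructor
  · rintro hc ⟨S, ⟨a, ha⟩, ⟨b, hb⟩, hcut⟩
    have key : ∀ {x y : α}, G.Walk x y → x ∈ S → y ∈ S := by
      intro x y w
      induction w with
      | nil => exact id
      | @cons u v w h p ih =>
        intro hx
        by_cases hm : v ∈ S
        · exact ih hm
        · exact (hcut u hx v hm h).elim
    obtain ⟨w⟩ := hc a b
    exact hb (key w ha)
  · intro h
    rw [SimpleGraph.connected_iff]
    refine ⟨?_, inferInstance⟩
    intro a b
    by_contra hr
    exact h ⟨{x | G.Reachable a x}, ⟨a, SimpleGraph.Reachable.refl a⟩, ⟨b, hr⟩,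
      fun i hi j hj hadj => hj (hi.trans hadj.reachable)⟩

lemma sb_ne {W : Type} [DecidableEq W] (h t h' t' : W) (hht : h ≠ t) (hht' : h' ≠ t')
    (hne1 : ¬(h = h' ∧ t = t')) (hne2 : ¬(h = t' ∧ t = h')) :
    ((if h = h' then (1:ℝ) else 0) - (if h = t' then 1 else 0) -
      (if t = h' then 1 else 0) + (if t = t' then 1 else 0)) ≠ 0 ↔
      (h = h' ∨ h = t' ∨ t = h' ∨ t = t') := by
  split_ifs <;> simp_all [eq_comm] <;> norm_num

lemma cancel {W : Type} [DecidableEq W] (a b c h t h' t' : W) (hab : a ≠ b) (hac : a ≠ c) (hbc : b ≠ c)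
    (hht : h ≠ t) (hht' : h' ≠ t')
    (hh : h = a ∨ h = b ∨ h = c) (ht : t = a ∨ t = b ∨ t = c)
    (hh' : h' = a ∨ h' = b ∨ h' = c) (ht' : t' = a ∨ t' = b ∨ t' = c)
    (hne1 : ¬(h = h' ∧ t = t')) (hne2 : ¬(h = t' ∧ t = h')) :
    ((if (t = a ∧ h = b) ∨ (t = b ∧ h = c) ∨ (t = c ∧ h = a) then (1:ℝ)
      else if (h = a ∧ t = b) ∨ (h = b ∧ t = c) ∨ (h = c ∧ t = a) then -1 else 0) *
     (if (t' = a ∧ h' = b) ∨ (t' = b ∧ h' = c) ∨ (t' = c ∧ h' = a) then (1:ℝ)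
      else if (h' = a ∧ t' = b) ∨ (h' = b ∧ t' = c) ∨ (h' = c ∧ t' = a) then -1 else 0)) +
    ((if h = h' then (1:ℝ) else 0) - (if h = t' then 1 else 0) -
      (if t = h' then 1 else 0) + (if t = t' then 1 else 0)) = 0 := by
  rcases hh with rfl | rfl | rfl <;> rcases ht with rfl | rfl | rfl <;>
    rcases hh' with rfl | rfl | rfl <;> rcases ht' with rfl | rfl | rfl <;>
    simp_all [eq_comm]

lemma three_distinct {W : Type} [DecidableEq W] (a b c : W)
    (h : ({a, b, c} : Finset W).card = 3) : a ≠ b ∧ a ≠ c ∧ b ≠ c := by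
  refine ⟨?_, ?_, ?_⟩ <;> rintro rfl
  · simp at h
    have := Finset.card_insert_le a ({c} : Finset W)
    simp only [Finset.card_singleton] at this; omega
  · rw [Finset.insert_comm] at h; simp at h
    have := Finset.card_insert_le b ({a} : Finset W)
    simp only [Finset.card_singleton] at this; omega
  · simp at h
    have := Finset.card_insert_le a ({b} : Finset W)
    simp only [Finset.card_singleton] at this; omega

lemma mem_imp_or {W : Type} (a b c h t : W) (hht : h ≠ t)
    (hh : h = a ∨ h = b ∨ h = c) (ht : t = a ∨ t = b ∨ t = c) :
    ((t = a ∧ h = b) ∨ (t = b ∧ h = c) ∨ (t = c ∧ h = a)) ∨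
    ((h = a ∧ t = b) ∨ (h = b ∧ t = c) ∨ (h = c ∧ t = a)) := by
  rcases hh with rfl | rfl | rfl <;> rcases ht with rfl | rfl | rfl <;> tauto

end Aux

section Graph

variable {G : SimpleGraph V} (o : Orientation G) (τ : TriOrientation G)

lemma head_adj_tail (e : G.edgeSet) : G.Adj (o.head e) (o.tail e) := by
  have he := e.2
  rw [o.consistent e, SimpleGraph.mem_edgeSet] at he
  exact he

lemma head_ne_tail (e : G.edgeSet) : o.head e ≠ o.tail e :=
  (head_adj_tail o e).ne

lemma head_mem (e : G.edgeSet) : o.head e ∈ (e : Sym2 V) := by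
  rw [o.consistent e]; exact Sym2.mem_mk_left _ _

lemma tail_mem (e : G.edgeSet) : o.tail e ∈ (e : Sym2 V) := by
  rw [o.consistent e]; exact Sym2.mem_mk_right _ _

lemma tri_distinct (t : Triangle G) :
    τ.fst t ≠ τ.snd t ∧ τ.fst t ≠ τ.trd t ∧ τ.snd t ≠ τ.trd t := by
  apply three_distinct
  rw [τ.consistent t]; exact t.2.1

lemma tri_mem (t : Triangle G) :
    τ.fst t ∈ t.val ∧ τ.snd t ∈ t.val ∧ τ.trd t ∈ t.val := by
  refine ⟨?_, ?_, ?_⟩ <;> rw [← τ.consistent t] <;> simp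

lemma agrees_mem {e : G.edgeSet} {t : Triangle G}
    (h : Agrees o τ e t ∨ Disagrees o τ e t) : EdgeInTri G (e : Sym2 V) t := by
  intro v hv
  rw [o.consistent e, Sym2.mem_iff] at hv
  obtain ⟨m1, m2, m3⟩ := tri_mem τ t
  rcases h with (⟨h1, h2⟩ | ⟨h1, h2⟩ | ⟨h1, h2⟩) | (⟨h1, h2⟩ | ⟨h1, h2⟩ | ⟨h1, h2⟩) <;>
    rcases hv with rfl | rfl <;> simp_all

lemma mem_agrees {e : G.edgeSet} {t : Triangle G} (h : EdgeInTri G (e : Sym2 V) t) :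
    Agrees o τ e t ∨ Disagrees o τ e t := by
  obtain ⟨hab, hac, hbc⟩ := tri_distinct τ t
  have hh : o.head e ∈ t.val := h _ (head_mem o e)
  have ht : o.tail e ∈ t.val := h _ (tail_mem o e)
  rw [← τ.consistent t] at hh ht
  simp only [Finset.mem_insert, Finset.mem_singleton] at hh ht
  exact mem_imp_or _ _ _ _ _ (head_ne_tail o e) hh ht

lemma cMat_eq_zero {e : G.edgeSet} {t : Triangle G} (h : ¬ EdgeInTri G (e : Sym2 V) t) :
    cMat G o τ t e = 0 := by
  have h1 : ¬ Agrees o τ e t := fun ha => h (agrees_mem o τ (Or.inl ha))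
  have h2 : ¬ Disagrees o τ e t := fun ha => h (agrees_mem o τ (Or.inr ha))
  simp [cMat, h1, h2]

lemma cMat_apply (t : Triangle G) (e : G.edgeSet) :
    cMat G o τ t e =
      (if (o.tail e = τ.fst t ∧ o.head e = τ.snd t) ∨ (o.tail e = τ.snd t ∧ o.head e = τ.trd t) ∨
          (o.tail e = τ.trd t ∧ o.head e = τ.fst t) then (1:ℝ)
       else if (o.head e = τ.fst t ∧ o.tail e = τ.snd t) ∨
          (o.head e = τ.snd t ∧ o.tail e = τ.trd t) ∨
          (o.head e = τ.trd t ∧ o.tail e = τ.fst t) then -1 else 0) := by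
  unfold cMat Agrees Disagrees
  split_ifs <;> first | rfl | tauto

lemma bbT_apply (e e' : G.edgeSet) :
    (bMat G o * (bMat G o)ᵀ) e e' =
      (if o.head e = o.head e' then (1:ℝ) else 0) - (if o.head e = o.tail e' then 1 else 0) -
      (if o.tail e = o.head e' then 1 else 0) + (if o.tail e = o.tail e' then 1 else 0) := by
  have hb : ∀ (f : G.edgeSet) v, bMat G o f v =
      (if v = o.head f then (1:ℝ) else 0) - (if v = o.tail f then 1 else 0) := by
    intro f v
    have := head_ne_tail o f
    unfold bMat
    split_ifs <;> simp_all
  rw [Matrix.mul_apply]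
  simp only [Matrix.transpose_apply, hb]
  simp only [sub_mul, mul_sub, Finset.sum_sub_distrib]
  simp only [ite_mul, one_mul, zero_mul, Finset.sum_ite_eq', Finset.mem_univ, if_true]
  ring

include o in
lemma common_unique (e e' : G.edgeSet) (hS : (e : Sym2 V) ≠ (e' : Sym2 V))
    (t1 t2 : Triangle G) (h1 : EdgeInTri G (e : Sym2 V) t1) (h1' : EdgeInTri G (e' : Sym2 V) t1)
    (h2 : EdgeInTri G (e : Sym2 V) t2) (h2' : EdgeInTri G (e' : Sym2 V) t2) : t1 = t2 := by
  have hht : o.head e ≠ o.tail e := head_ne_tail o e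
  have hht' : o.head e' ≠ o.tail e' := head_ne_tail o e'
  have key : ∃ w : V, w ∈ (e' : Sym2 V) ∧ w ∉ ({o.head e, o.tail e} : Finset V) := by
    by_contra hcon
    push_neg at hcon
    have hm1 := hcon (o.head e') (head_mem o e')
    have hm2 := hcon (o.tail e') (tail_mem o e')
    simp only [Finset.mem_insert, Finset.mem_singleton] at hm1 hm2
    apply hS
    rw [o.consistent e, o.consistent e', Sym2.eq_iff]
    rcases hm1 with e1 | e1 <;> rcases hm2 with e2 | e2
    · exact absurd (e1.trans e2.symm) hht'
    · exact Or.inl ⟨e1.symm, e2.symm⟩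
    · exact Or.inr ⟨e2.symm, e1.symm⟩
    · exact absurd (e1.trans e2.symm) hht'
  obtain ⟨w, hw, hwn⟩ := key
  have hsub : ∀ t' : Triangle G, EdgeInTri G (e : Sym2 V) t' → EdgeInTri G (e' : Sym2 V) t' →
      insert w ({o.head e, o.tail e} : Finset V) = t'.val := by
    intro t' he ht'
    have hsub1 : insert w ({o.head e, o.tail e} : Finset V) ⊆ t'.val := by
      intro x hx
      rcases Finset.mem_insert.mp hx with rfl | hx
      · exact ht' _ hw
      · rcases Finset.mem_insert.mp hx with rfl | hx
        · exact he _ (head_mem o e)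
        · rw [Finset.mem_singleton] at hx; subst hx; exact he _ (tail_mem o e)
    have hcard : (insert w ({o.head e, o.tail e} : Finset V)).card = 3 := by
      rw [Finset.card_insert_of_notMem hwn, Finset.card_pair hht]
    exact Finset.eq_of_subset_of_card_le hsub1 (by rw [hcard, t'.2.1])
  exact Subtype.ext ((hsub t1 h1 h1').symm.trans (hsub t2 h2 h2'))

lemma helm_ne_zero_iff (e e' : G.edgeSet) (hne : e ≠ e') :
    helm G o τ e e' ≠ 0 ↔ (lambdaR G).Adj e e' := by
  have hS : (e : Sym2 V) ≠ (e' : Sym2 V) := fun hh => hne (Subtype.ext hh)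
  have hSe : ¬(o.head e = o.head e' ∧ o.tail e = o.tail e') ∧
      ¬(o.head e = o.tail e' ∧ o.tail e = o.head e') := by
    constructor <;> intro hc <;> apply hS <;>
      rw [o.consistent e, o.consistent e', Sym2.eq_iff]
    · exact Or.inl hc
    · exact Or.inr hc
  have hshare : (∃ v, v ∈ (e : Sym2 V) ∧ v ∈ (e' : Sym2 V)) ↔
      (o.head e = o.head e' ∨ o.head e = o.tail e' ∨
       o.tail e = o.head e' ∨ o.tail e = o.tail e') := by
    constructor
    · rintro ⟨v, hv1, hv2⟩
      rw [o.consistent e, Sym2.mem_iff] at hv1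
      rw [o.consistent e', Sym2.mem_iff] at hv2
      rcases hv1 with rfl | rfl <;> rcases hv2 with h | h <;> tauto
    · rintro (h | h | h | h)
      exacts [⟨o.head e, head_mem o e, h ▸ head_mem o e'⟩,
        ⟨o.head e, head_mem o e, h ▸ tail_mem o e'⟩,
        ⟨o.tail e, tail_mem o e, h ▸ head_mem o e'⟩,
        ⟨o.tail e, tail_mem o e, h ▸ tail_mem o e'⟩]
  by_cases hT : ∃ t : Triangle G, EdgeInTri G (e : Sym2 V) t ∧ EdgeInTri G (e' : Sym2 V) t
  · obtain ⟨t0, ht0, ht0'⟩ := hT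
    have hzero : helm G o τ e e' = 0 := by
      have hCC : ((cMat G o τ)ᵀ * cMat G o τ) e e' = cMat G o τ t0 e * cMat G o τ t0 e' := by
        rw [Matrix.mul_apply]
        simp only [Matrix.transpose_apply]
        apply Finset.sum_eq_single
        · intro tr _ htr
          by_cases hx1 : EdgeInTri G (e : Sym2 V) tr
          · by_cases hx2 : EdgeInTri G (e' : Sym2 V) tr
            · exact absurd (common_unique o e e' hS tr t0 hx1 hx2 ht0 ht0') htr
            · rw [cMat_eq_zero o τ hx2, mul_zero]
          · rw [cMat_eq_zero o τ hx1, zero_mul]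
        · intro hmem; exact absurd (Finset.mem_univ t0) hmem
      unfold helm
      rw [Matrix.add_apply, bbT_apply, hCC, cMat_apply, cMat_apply, add_comm]
      obtain ⟨hab, hac, hbc⟩ := tri_distinct τ t0
      have hh : o.head e = τ.fst t0 ∨ o.head e = τ.snd t0 ∨ o.head e = τ.trd t0 := by
        have := ht0 _ (head_mem o e); rw [← τ.consistent t0] at this; simpa using this
      have ht : o.tail e = τ.fst t0 ∨ o.tail e = τ.snd t0 ∨ o.tail e = τ.trd t0 := by
        have := ht0 _ (tail_mem o e); rw [← τ.consistent t0] at this; simpa using this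
      have hh' : o.head e' = τ.fst t0 ∨ o.head e' = τ.snd t0 ∨ o.head e' = τ.trd t0 := by
        have := ht0' _ (head_mem o e'); rw [← τ.consistent t0] at this; simpa using this
      have ht' : o.tail e' = τ.fst t0 ∨ o.tail e' = τ.snd t0 ∨ o.tail e' = τ.trd t0 := by
        have := ht0' _ (tail_mem o e'); rw [← τ.consistent t0] at this; simpa using this
      exact cancel (τ.fst t0) (τ.snd t0) (τ.trd t0) (o.head e) (o.tail e) (o.head e')
        (o.tail e') hab hac hbc (head_ne_tail o e) (head_ne_tail o e') hh ht hh' ht'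
        hSe.1 hSe.2
    rw [hzero]
    constructor
    · intro hcon; exact absurd rfl hcon
    · rintro ⟨-, -, hno⟩; exact absurd ⟨t0, ht0, ht0'⟩ hno
  · have hCC : ((cMat G o τ)ᵀ * cMat G o τ) e e' = 0 := by
      rw [Matrix.mul_apply]
      simp only [Matrix.transpose_apply]
      apply Finset.sum_eq_zero
      intro tr _
      by_cases hx1 : EdgeInTri G (e : Sym2 V) tr
      · by_cases hx2 : EdgeInTri G (e' : Sym2 V) tr
        · exact absurd ⟨tr, hx1, hx2⟩ hT
        · rw [cMat_eq_zero o τ hx2, mul_zero]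
      · rw [cMat_eq_zero o τ hx1, zero_mul]
    have hhelm : helm G o τ e e' =
        (if o.head e = o.head e' then (1:ℝ) else 0) - (if o.head e = o.tail e' then 1 else 0) -
        (if o.tail e = o.head e' then 1 else 0) + (if o.tail e = o.tail e' then 1 else 0) := by
      unfold helm
      rw [Matrix.add_apply, hCC, bbT_apply, add_zero]
    rw [hhelm, sb_ne _ _ _ _ (head_ne_tail o e) (head_ne_tail o e') hSe.1 hSe.2]
    constructor
    · intro h4; exact ⟨hne, hshare.2 h4, hT⟩
    · rintro ⟨-, hsh, -⟩; exact hshare.1 hsh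

end Graph

/-- `H(G)` is irreducible if and only if `Λ_R(G)` is connected. -/
theorem statement9 (G : SimpleGraph V) [Nonempty G.edgeSet]
    (o : Orientation G) (τ : TriOrientation G) :
    ¬MatReducible (helm G o τ) ↔ (lambdaR G).Connected := by
  rw [matReducible_iff, connected_iff_no_cut]
  apply not_congr
  apply exists_congr
  intro S
  constructor
  · rintro ⟨h1, h2, h3⟩
    refine ⟨h1, h2, fun i hi j hj hadj => ?_⟩
    have hij : i ≠ j := fun hh => hj (hh ▸ hi)
    exact (helm_ne_zero_iff o τ i j hij).2 hadj (h3 i hi j hj).1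
  · rintro ⟨h1, h2, h3⟩
    refine ⟨h1, h2, fun i hi j hj => ?_⟩
    have hij : i ≠ j := fun hh => hj (hh ▸ hi)
    constructor
    · by_contra hc
      exact h3 i hi j hj ((helm_ne_zero_iff o τ i j hij).1 hc)
    · by_contra hc
      exact h3 i hi j hj ((lambdaR G).adj_symm ((helm_ne_zero_iff o τ j i hij.symm).1 hc))

end HelmPaper
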